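/- Let H be a finite-dimensional real inner product space, let β > 0, let f : H → ℝ ∪ {+∞} be proper, lower semicontinuous, and convex, let g : H → ℝ be convex and differentiable with β-Lipschitz gradient, and assume that f + g attains its minimum at some point of H. Let x₀ ∈ dom f, let 0 < ε < 1/β, let (γₙ) be a sequence in [ε, 2/β − ε], and define the proximal gradient iterates by xₙ₊₁ = prox_{γₙ f}(xₙ − γₙ ∇g(xₙ)). Then the sequence (xₙ) converges to a minimizer of f + g. -/

import Mathlib

open Filter Topology

noncomputable section

/-- Convexity for extended-real-valued functions. -/
def ConvexE {E : Type*} [AddCommGroup E] [Module ℝ E] (f : E → EReal) : Prop :=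
  ∀ x y : E, ∀ a b : ℝ, 0 ≤ a → 0 ≤ b → a + b = 1 →
    f (a • x + b • y) ≤ (a : EReal) * f x + (b : EReal) * f y

local notation "⟪" a ", " b "⟫" => @inner ℝ _ _ a b

section Helpers
variable {H : Type*} [NormedAddCommGroup H] [InnerProductSpace ℝ H] [CompleteSpace H]

lemma dirDeriv {g : H → ℝ} {G x : H} (h : HasGradientAt g G x) (v : H) :
    Tendsto (fun t : ℝ => (g (x + t • v) - g x) / t) (𝓝[>] (0:ℝ)) (𝓝 ⟪G, v⟫) := by
  have hline : HasDerivAt (fun t : ℝ => x + t • v) v 0 := by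
    simpa using ((hasDerivAt_id (0:ℝ)).smul_const v).const_add x
  have hc : HasDerivAt (fun t : ℝ => g (x + t • v)) ⟪G, v⟫ 0 := by
    have h' : HasFDerivAt g ((InnerProductSpace.toDual ℝ H) G) (x + (0:ℝ) • v) := by
      simpa using h.hasFDerivAt
    have := h'.comp_hasDerivAt 0 hline
    exact this
  have := hasDerivAt_iff_tendsto_slope.mp hc
  have h2 : Tendsto (slope (fun t : ℝ => g (x + t • v)) 0) (𝓝[>] (0:ℝ)) (𝓝 ⟪G, v⟫) :=
    this.mono_left (nhdsWithin_mono _ (fun t ht => ne_of_gt ht))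
  refine h2.congr (fun t => ?_)
  simp [slope_def_field]

lemma gradIneq {g : H → ℝ} (hg : ConvexOn ℝ Set.univ g) {G x : H}
    (h : HasGradientAt g G x) (y : H) : g x + ⟪G, y - x⟫ ≤ g y := by
  have hd := dirDeriv h (y - x)
  have hb : ∀ t ∈ Set.Ioc (0:ℝ) 1, (g (x + t • (y - x)) - g x) / t ≤ g y - g x := by
    intro t ht
    have hcv := hg.2 (Set.mem_univ x) (Set.mem_univ y) (by linarith [ht.2] : (0:ℝ) ≤ 1 - t)
      (le_of_lt ht.1) (by ring)
    have hxy : (1 - t) • x + t • y = x + t • (y - x) := by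
      simp [smul_sub, sub_smul]; abel
    rw [hxy] at hcv
    rw [div_le_iff₀ ht.1]
    have : (1 - t) • g x + t • g y = (1-t) * g x + t * g y := rfl
    nlinarith [hcv, this]
  have : ∀ᶠ t in 𝓝[>] (0:ℝ), (g (x + t • (y - x)) - g x) / t ≤ g y - g x := by
    filter_upwards [Ioc_mem_nhdsGT_of_mem (by norm_num : (0:ℝ) ∈ Set.Ico (0:ℝ) 1)] with t ht
    exact hb t ht
  have := le_of_tendsto hd this
  linarith

lemma descentLemma {g : H → ℝ} {g' : H → H} {β : ℝ} (hβ : 0 < β)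
    (hg_grad : ∀ z, HasGradientAt g (g' z) z)
    (hg_lip : ∀ z w : H, ‖g' z - g' w‖ ≤ β * ‖z - w‖) (x y : H) :
    g y ≤ g x + ⟪g' x, y - x⟫ + β / 2 * ‖y - x‖ ^ 2 := by
  set v := y - x with hv
  have hg'cont : Continuous g' := by
    have : LipschitzWith (Real.toNNReal β) g' := by
      apply LipschitzWith.of_dist_le_mul
      intro a b
      rw [dist_eq_norm, dist_eq_norm, Real.coe_toNNReal β hβ.le]
      exact hg_lip a b
    exact this.continuous
  have hderiv : ∀ t : ℝ, HasDerivAt (fun s : ℝ => g (x + s • v)) ⟪g' (x + t • v), v⟫ t := by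
    intro t
    have hline : HasDerivAt (fun s : ℝ => x + s • v) v t := by
      simpa using ((hasDerivAt_id t).smul_const v).const_add x
    exact ((hg_grad (x + t • v)).hasFDerivAt.comp_hasDerivAt t hline).congr_deriv (by simp)
  have hcont : Continuous fun t : ℝ => ⟪g' (x + t • v), v⟫ := by
    exact (hg'cont.comp (by continuity)).inner continuous_const
  have hFTC : g (x + (1:ℝ) • v) - g (x + (0:ℝ) • v)
      = ∫ t in (0:ℝ)..1, ⟪g' (x + t • v), v⟫ := by
    rw [intervalIntegral.integral_eq_sub_of_hasDerivAt (fun t _ => hderiv t)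
      (hcont.intervalIntegrable 0 1)]
  have hbound : ∫ t in (0:ℝ)..1, ⟪g' (x + t • v), v⟫
      ≤ ∫ t in (0:ℝ)..1, (⟪g' x, v⟫ + t * β * ‖v‖ ^ 2) := by
    apply intervalIntegral.integral_mono_on (by norm_num) (hcont.intervalIntegrable 0 1)
      ((by continuity : Continuous fun t : ℝ => ⟪g' x, v⟫ + t * β * ‖v‖ ^ 2).intervalIntegrable 0 1)
    intro t ht
    have h1 : ⟪g' (x + t • v) - g' x, v⟫ ≤ ‖g' (x + t • v) - g' x‖ * ‖v‖ :=
      real_inner_le_norm _ _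
    have h2 : ‖g' (x + t • v) - g' x‖ ≤ β * (t * ‖v‖) := by
      have := hg_lip (x + t • v) x
      simpa [norm_smul, abs_of_nonneg ht.1] using this
    have h3 : ⟪g' (x + t • v), v⟫ = ⟪g' x, v⟫ + ⟪g' (x + t • v) - g' x, v⟫ := by
      rw [inner_sub_left]; ring
    nlinarith [norm_nonneg v, mul_le_mul_of_nonneg_right h2 (norm_nonneg v)]
  have hval : ∫ t in (0:ℝ)..1, (⟪g' x, v⟫ + t * β * ‖v‖ ^ 2)
      = ⟪g' x, v⟫ + β / 2 * ‖v‖ ^ 2 := by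
    simp [intervalIntegral.integral_add (intervalIntegrable_const)
      (((intervalIntegral.intervalIntegrable_id).mul_const _)), mul_assoc,
      intervalIntegral.integral_mul_const, integral_id]
    ring
  have : g y - g x ≤ ⟪g' x, v⟫ + β / 2 * ‖v‖ ^ 2 := by
    have := hFTC
    simp only [one_smul, zero_smul, add_zero] at this
    rw [hv] at this
    simp only [add_sub_cancel] at this
    rw [this]
    exact hbound.trans_eq hval
  linarith

lemma coco1 {g : H → ℝ} {g' : H → H} {β : ℝ} (hβ : 0 < β)
    (hg_convex : ConvexOn ℝ Set.univ g)
    (hg_grad : ∀ z, HasGradientAt g (g' z) z)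
    (hg_lip : ∀ z w : H, ‖g' z - g' w‖ ≤ β * ‖z - w‖) (x y : H) :
    g x + ⟪g' x, y - x⟫ + 1/(2*β) * ‖g' y - g' x‖ ^ 2 ≤ g y := by
  set w := g' y - g' x with hw
  set z := y - (1/β) • w with hz
  have A := gradIneq hg_convex (hg_grad x) z
  have B := descentLemma hβ hg_grad hg_lip y z
  have e1 : ⟪g' x, z - x⟫ = ⟪g' x, y - x⟫ - (1/β) * ⟪g' x, w⟫ := by
    rw [hz]
    rw [show y - (1/β) • w - x = (y - x) - (1/β) • w by abel]
    rw [inner_sub_right, real_inner_smul_right]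
  have e2 : ⟪g' y, z - y⟫ = -(1/β) * ⟪g' y, w⟫ := by
    rw [hz, show y - (1/β) • w - y = -((1/β) • w) by abel, inner_neg_right,
      real_inner_smul_right]; ring
  have e3 : ‖z - y‖ ^ 2 = (1/β)^2 * ‖w‖ ^ 2 := by
    rw [hz, show y - (1/β) • w - y = -((1/β) • w) by abel, norm_neg, norm_smul]
    simp [abs_of_pos hβ]
    ring
  have e4 : ⟪g' y, w⟫ - ⟪g' x, w⟫ = ‖w‖ ^ 2 := by
    rw [← inner_sub_left, ← hw, real_inner_self_eq_norm_sq]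
  rw [e1] at A
  rw [e2, e3] at B
  have hβ2 : β ≠ 0 := ne_of_gt hβ
  have : g x + (⟪g' x, y - x⟫ - 1/β * ⟪g' x, w⟫) ≤
      g y + -(1/β) * ⟪g' y, w⟫ + β/2 * ((1/β)^2 * ‖w‖^2) := A.trans B
  have hfe : β/2 * ((1/β)^2 * ‖w‖^2) = 1/(2*β) * ‖w‖^2 := by field_simp
  have e5a : 1/β * ⟪g' y, w⟫ - 1/β * ⟪g' x, w⟫ = 1/β * ‖w‖^2 := by
    rw [← mul_sub, e4]
  have hq' : 1/(2*β) * ‖w‖^2 + 1/(2*β) * ‖w‖^2 = 1/β * ‖w‖^2 := by field_simp; ring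
  linarith [this, e5a, hq', hfe]

lemma coco {g : H → ℝ} {g' : H → H} {β : ℝ} (hβ : 0 < β)
    (hg_convex : ConvexOn ℝ Set.univ g)
    (hg_grad : ∀ z, HasGradientAt g (g' z) z)
    (hg_lip : ∀ z w : H, ‖g' z - g' w‖ ≤ β * ‖z - w‖) (x y : H) :
    1/β * ‖g' x - g' y‖ ^ 2 ≤ ⟪g' x - g' y, x - y⟫ := by
  have h1 := coco1 hβ hg_convex hg_grad hg_lip x y
  have h2 := coco1 hβ hg_convex hg_grad hg_lip y x
  have e1 : ⟪g' x - g' y, x - y⟫ = ⟪g' x, x - y⟫ - ⟪g' y, x - y⟫ := inner_sub_left _ _ _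
  have e2 : ⟪g' x, x - y⟫ = - ⟪g' x, y - x⟫ := by
    rw [show x - y = -(y-x) by abel, inner_neg_right]
  have e3 : ‖g' x - g' y‖ = ‖g' y - g' x‖ := by rw [← norm_neg]; congr 1; abel
  rw [e1, e2, e3]
  rw [show ‖g' x - g' y‖ = ‖g' y - g' x‖ by rw [← norm_neg]; congr 1; abel] at h2
  have hq2 : 1/(2*β) * ‖g' y - g' x‖^2 + 1/(2*β) * ‖g' y - g' x‖^2 = 1/β * ‖g' y - g' x‖^2 := by
    field_simp; ring
  linarith [h1, h2]

lemma le_of_small_t {a b c : ℝ} (hc : 0 ≤ c)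
    (h : ∀ t ∈ Set.Ioc (0:ℝ) 1, a ≤ b + t * c) : a ≤ b := by
  by_contra hab
  push_neg at hab
  set t := min 1 ((a - b) / (2 * (c + 1))) with ht
  have hab' : 0 < a - b := by linarith
  have htpos : 0 < t := lt_min one_pos (by positivity)
  have ht1 : t ≤ 1 := min_le_left _ _
  have h2 : t * c ≤ (a - b) / 2 := by
    have h3 : t ≤ (a - b) / (2 * (c + 1)) := min_le_right _ _
    have := mul_le_mul_of_nonneg_right h3 hc
    have h4 : (a - b) / (2 * (c + 1)) * c ≤ (a - b) / 2 := by
      rw [div_mul_eq_mul_div, div_le_div_iff₀ (by positivity) (by norm_num)]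
      nlinarith
    linarith
  have := h t ⟨htpos, ht1⟩
  linarith

lemma proxIneq {f : H → EReal} (hf_ne_bot : ∀ z, f z ≠ ⊥) (hf_convex : ConvexE f)
    {γ : ℝ} (hγ : 0 < γ) {u xp : H} (hxp : f xp ≠ ⊤)
    (hmin : ∀ y : H, (γ : EReal) * f xp + ((1/2 * ‖u - xp‖^2 : ℝ) : EReal) ≤
      (γ : EReal) * f y + ((1/2 * ‖u - y‖^2 : ℝ) : EReal))
    {y : H} (hy : f y ≠ ⊤) :
    γ * (f xp).toReal + ⟪u - xp, y - xp⟫ ≤ γ * (f y).toReal := by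
  set A := (f xp).toReal with hA
  set B := (f y).toReal with hB
  have hfxp : f xp = (A : EReal) := (EReal.coe_toReal hxp (hf_ne_bot xp)).symm
  have hfy : f y = (B : EReal) := (EReal.coe_toReal hy (hf_ne_bot y)).symm
  have key : ∀ t ∈ Set.Ioc (0:ℝ) 1,
      γ * A + ⟪u - xp, y - xp⟫ ≤ γ * B + t * (1/2 * ‖y - xp‖^2) := by
    intro t ht
    set yt := (1 - t) • xp + t • y with hyt
    have hconv := hf_convex xp y (1 - t) t (by linarith [ht.2]) ht.1.le (by ring)
    rw [hfxp, hfy] at hconv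
    have hconv' : f yt ≤ (((1 - t) * A + t * B : ℝ) : EReal) := by
      rw [EReal.coe_add, EReal.coe_mul, EReal.coe_mul] at *
      exact hconv
    have hmono : (γ : EReal) * f yt ≤ (γ : EReal) * (((1 - t) * A + t * B : ℝ) : EReal) :=
      mul_le_mul_of_nonneg_left hconv' (by exact_mod_cast hγ.le)
    have hchain : (γ : EReal) * (A : EReal) + ((1/2 * ‖u - xp‖^2 : ℝ) : EReal) ≤
        (γ : EReal) * (((1 - t) * A + t * B : ℝ) : EReal) + ((1/2 * ‖u - yt‖^2 : ℝ) : EReal) := by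
      calc (γ : EReal) * (A : EReal) + ((1/2 * ‖u - xp‖^2 : ℝ) : EReal)
          = (γ : EReal) * f xp + ((1/2 * ‖u - xp‖^2 : ℝ) : EReal) := by rw [hfxp]
        _ ≤ (γ : EReal) * f yt + ((1/2 * ‖u - yt‖^2 : ℝ) : EReal) := hmin yt
        _ ≤ _ := add_le_add hmono le_rfl
    rw [← EReal.coe_mul, ← EReal.coe_mul, ← EReal.coe_add, ← EReal.coe_add,
      EReal.coe_le_coe_iff] at hchain
    have hexp : ‖u - yt‖^2 = ‖u - xp‖^2 - 2 * t * ⟪u - xp, y - xp⟫ + t^2 * ‖y - xp‖^2 := by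
      have : u - yt = (u - xp) - t • (y - xp) := by
        rw [hyt]; module
      rw [this, norm_sub_sq_real, real_inner_smul_right, norm_smul]
      simp [abs_of_pos ht.1]
      ring
    rw [hexp] at hchain
    have hdiv : γ * A + ⟪u - xp, y - xp⟫ ≤ γ * B + t * (1/2 * ‖y - xp‖^2) := by
      have h0 : t * (γ * A + ⟪u - xp, y - xp⟫) ≤ t * (γ * B + t * (1/2 * ‖y - xp‖^2)) := by
        nlinarith [hchain]
      exact le_of_mul_le_mul_left h0 ht.1
    exact hdiv
  have := le_of_small_t (by positivity) key
  linarith [this]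

lemma minIneq {f : H → EReal} (hf_ne_bot : ∀ z, f z ≠ ⊥) (hf_convex : ConvexE f)
    {g : H → ℝ} {g' : H → H} (hg_grad : ∀ z, HasGradientAt g (g' z) z)
    {q : H} (hq_ne_top : f q ≠ ⊤)
    (hmin : ∀ y : H, f q + (g q : EReal) ≤ f y + (g y : EReal))
    {y : H} (hy : f y ≠ ⊤) :
    (f q).toReal ≤ (f y).toReal + ⟪g' q, y - q⟫ := by
  set A := (f q).toReal with hA
  set B := (f y).toReal with hB
  have hfq : f q = (A : EReal) := (EReal.coe_toReal hq_ne_top (hf_ne_bot q)).symm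
  have hfy : f y = (B : EReal) := (EReal.coe_toReal hy (hf_ne_bot y)).symm
  set v := y - q with hv
  have key : ∀ t ∈ Set.Ioc (0:ℝ) 1, A - B ≤ (g (q + t • v) - g q) / t := by
    intro t ht
    set yt := (1 - t) • q + t • y with hyt
    have hyt' : yt = q + t • v := by rw [hyt, hv]; module
    have hconv := hf_convex q y (1 - t) t (by linarith [ht.2]) ht.1.le (by ring)
    rw [hfq, hfy] at hconv
    have hconv' : f yt ≤ (((1 - t) * A + t * B : ℝ) : EReal) := by
      rw [EReal.coe_add, EReal.coe_mul, EReal.coe_mul] at *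
      exact hconv
    have hchain : ((A + g q : ℝ) : EReal) ≤ (((1 - t) * A + t * B + g yt : ℝ) : EReal) := by
      calc ((A + g q : ℝ) : EReal) = f q + (g q : EReal) := by
            rw [hfq, EReal.coe_add]
        _ ≤ f yt + (g yt : EReal) := hmin yt
        _ ≤ (((1 - t) * A + t * B : ℝ) : EReal) + (g yt : EReal) := add_le_add hconv' le_rfl
        _ = _ := by norm_cast
    rw [EReal.coe_le_coe_iff] at hchain
    rw [hyt'] at hchain
    rw [le_div_iff₀ ht.1]
    linarith [hchain]
  have hd := dirDeriv (hg_grad q) v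
  have hev : ∀ᶠ t in 𝓝[>] (0:ℝ), A - B ≤ (g (q + t • v) - g q) / t := by
    filter_upwards [Ioc_mem_nhdsGT_of_mem (by norm_num : (0:ℝ) ∈ Set.Ico (0:ℝ) 1)] with t ht
    exact key t ht
  have := ge_of_tendsto hd hev
  linarith [this]

lemma fejer_step {β ε γ : ℝ} (hβ : 0 < β) (hε : 0 < ε) (hγ1 : ε ≤ γ) (hγ2 : γ ≤ 2/β - ε)
    {xn xp q wn wq : H}
    (hkey : ⟪xn - γ • wn - xp, q - xp⟫ ≤ γ * ⟪wq, xp - q⟫)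
    (hcoco : 1/β * ‖wn - wq‖^2 ≤ ⟪wn - wq, xn - q⟫) :
    ‖xp - q‖^2 ≤ ‖xn - q‖^2 - ε * β / 2 * ‖xp - xn‖^2 := by
  set d := xp - q with hd
  set s := xn - q with hs
  set w := wn - wq with hw
  have hγ0 : 0 < γ := lt_of_lt_of_le hε hγ1
  set t := γ * β / 2 with htdef
  have htpos : 0 < t := by positivity
  have hsd : xn - xp = s - d := by rw [hs, hd]; abel
  have hxpxn : ‖xp - xn‖ = ‖s - d‖ := by rw [← hsd, norm_sub_rev]
  -- expand hkey
  have hexp : xn - γ • wn - xp = s - d - γ • w - γ • wq := by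
    rw [hs, hd, hw]; module
  rw [hexp] at hkey
  have hk1 : ‖d‖^2 + γ * ⟪w, d⟫ ≤ ⟪s, d⟫ := by
    have e : ⟪s - d - γ • w - γ • wq, q - xp⟫
        = -⟪s, d⟫ + ‖d‖^2 + γ * ⟪w, d⟫ + γ * ⟪wq, d⟫ := by
      rw [show q - xp = -d by rw [hd]; abel]
      rw [inner_neg_right, inner_sub_left, inner_sub_left, inner_sub_left,
        real_inner_smul_left, real_inner_smul_left, real_inner_self_eq_norm_sq]
      ring
    rw [e] at hkey
    have e2 : ⟪wq, xp - q⟫ = ⟪wq, d⟫ := by rw [hd]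
    rw [e2] at hkey
    linarith
  have hk2 : ‖s - d‖^2 = ‖s‖^2 - 2 * ⟪s, d⟫ + ‖d‖^2 := norm_sub_sq_real s d
  have hk3 : ⟪w, s - d⟫ = ⟪w, s⟫ - ⟪w, d⟫ := inner_sub_right _ _ _
  have hk3' : 2 * γ * ⟪w, d⟫ = 2 * γ * ⟪w, s⟫ - 2 * γ * ⟪w, s - d⟫ := by
    rw [hk3]; ring
  have hk5 : ⟪w, s - d⟫ ≤ ‖w‖ * ‖s - d‖ := real_inner_le_norm _ _
  have hk6 : 2 * γ * (‖w‖ * ‖s - d‖) ≤ t * ‖s - d‖^2 + γ^2 / t * ‖w‖^2 := by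
    have hsq : (t * ‖s - d‖ - γ * ‖w‖)^2 ≥ 0 := sq_nonneg _
    have h7 : t * (2 * γ * (‖w‖ * ‖s - d‖)) ≤ t * (t * ‖s - d‖^2 + γ^2 / t * ‖w‖^2) := by
      field_simp
      nlinarith [hsq]
    exact le_of_mul_le_mul_left h7 htpos
  have hgt' : γ^2 / t * ‖w‖^2 = 2 * γ / β * ‖w‖^2 := by
    rw [htdef]; field_simp
  have hcoco' : 2 * γ * (1/β * ‖w‖^2) ≤ 2 * γ * ⟪w, s⟫ :=
    mul_le_mul_of_nonneg_left hcoco (by positivity)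
  have h2gb : 2 * γ * (1/β * ‖w‖^2) = 2 * γ / β * ‖w‖^2 := by ring
  have hγw : 2 * γ * ⟪w, s - d⟫ ≤ 2 * γ * (‖w‖ * ‖s - d‖) :=
    mul_le_mul_of_nonneg_left hk5 (by positivity)
  have hts : ε * β / 2 ≤ 1 - t := by
    have h8 := mul_le_mul_of_nonneg_right hγ2 hβ.le
    have h9 : (2/β - ε) * β = 2 - ε * β := by field_simp
    rw [htdef]; nlinarith [h8, h9]
  clear_value d s w t
  have hmain : ‖d‖^2 ≤ ‖s‖^2 - (1 - t) * ‖s - d‖^2 := by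
    linarith [hk1, hk2, hk3', hk6, hgt', hcoco', h2gb, hγw]
  rw [hxpxn]
  have h10 := mul_le_mul_of_nonneg_right hts (sq_nonneg ‖s - d‖)
  linarith [hmain, h10]

lemma lipCont {g' : H → H} {β : ℝ} (hβ : 0 < β)
    (hg_lip : ∀ z w : H, ‖g' z - g' w‖ ≤ β * ‖z - w‖) : Continuous g' := by
  have : LipschitzWith (Real.toNNReal β) g' := by
    apply LipschitzWith.of_dist_le_mul
    intro a b
    rw [dist_eq_norm, dist_eq_norm, Real.coe_toNNReal β hβ.le]
    exact hg_lip a b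
  exact this.continuous

lemma tendsto_of_sq {v : ℕ → ℝ} (hv : ∀ n, 0 ≤ v n)
    (h : Tendsto (fun n => v n ^ 2) atTop (𝓝 0)) : Tendsto v atTop (𝓝 0) := by
  have h2 : Tendsto (fun n => Real.sqrt (v n ^ 2)) atTop (𝓝 (Real.sqrt 0)) :=
    (Real.continuous_sqrt.tendsto 0).comp h
  rw [Real.sqrt_zero] at h2
  refine h2.congr fun n => Real.sqrt_sq (hv n)

end Helpers

/-- Convergence of the proximal gradient iterates to a minimizer of `f + g`. -/
theorem proximal_gradient_iterate_convergence
    {H : Type*} [NormedAddCommGroup H] [InnerProductSpace ℝ H] [FiniteDimensional ℝ H]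
    (β : ℝ) (hβ : 0 < β)
    (f : H → EReal)
    (hf_proper : ∃ z, f z ≠ ⊤) (hf_ne_bot : ∀ z, f z ≠ ⊥)
    (hf_lsc : LowerSemicontinuous f) (hf_convex : ConvexE f)
    (g : H → ℝ) (g' : H → H)
    (hg_convex : ConvexOn ℝ Set.univ g)
    (hg_grad : ∀ z : H, HasGradientAt g (g' z) z)
    (hg_lip : ∀ z w : H, ‖g' z - g' w‖ ≤ β * ‖z - w‖)
    (xstar : H)
    (hxstar : ∀ y : H, f xstar + (g xstar : EReal) ≤ f y + (g y : EReal))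
    (ε : ℝ) (hε : 0 < ε) (hεβ : ε < 1/β)
    (γ : ℕ → ℝ) (hγ : ∀ n, γ n ∈ Set.Icc ε (2/β - ε))
    (x : ℕ → H) (hx0 : f (x 0) ≠ ⊤)
    (hiter : ∀ n, ∀ y : H,
      (γ n : EReal) * f (x (n+1)) +
          ((1/2 * ‖(x n - γ n • g' (x n)) - x (n+1)‖^2 : ℝ) : EReal) ≤
        (γ n : EReal) * f y +
          ((1/2 * ‖(x n - γ n • g' (x n)) - y‖^2 : ℝ) : EReal)) :
    ∃ xlim : H, Tendsto x atTop (𝓝 xlim) ∧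
      ∀ y : H, f xlim + (g xlim : EReal) ≤ f y + (g y : EReal) := by
  obtain ⟨z₀, hz₀⟩ := hf_proper
  have hγpos : ∀ n, 0 < γ n := fun n => lt_of_lt_of_le hε (hγ n).1
  set F : H → ℝ := fun z => (f z).toReal with hF
  -- f (x n) never ⊤
  have hxne : ∀ n, f (x n) ≠ ⊤ := by
    intro n
    induction n with
    | zero => exact hx0
    | succ n ih =>
      intro htop
      have h := hiter n (x n)
      rw [htop] at h
      have hlhs : (γ n : EReal) * (⊤ : EReal) = ⊤ :=
        EReal.mul_top_of_pos (by exact_mod_cast hγpos n)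
      rw [hlhs, EReal.top_add_coe] at h
      have : ((γ n * F (x n) + 1/2 * ‖(x n - γ n • g' (x n)) - x n‖^2 : ℝ) : EReal) < ⊤ :=
        EReal.coe_lt_top _
      rw [show f (x n) = ((F (x n) : ℝ) : EReal) from
        (EReal.coe_toReal ih (hf_ne_bot _)).symm, ← EReal.coe_mul, ← EReal.coe_add] at h
      exact EReal.coe_ne_top _ (le_antisymm le_top h)
  -- f xstar ≠ ⊤
  have hxstar_ne_top : f xstar ≠ ⊤ := by
    intro htop
    have h := hxstar z₀
    rw [htop, EReal.top_add_coe] at h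
    have hz := EReal.coe_toReal hz₀ (hf_ne_bot z₀)
    rw [show f z₀ = ((F z₀ : ℝ) : EReal) from hz.symm, ← EReal.coe_add] at h
    exact EReal.coe_ne_top _ (le_antisymm le_top h)
  -- P inequalities
  have hP : ∀ n, ∀ y : H, f y ≠ ⊤ →
      γ n * F (x (n+1)) + ⟪x n - γ n • g' (x n) - x (n+1), y - x (n+1)⟫ ≤ γ n * F y :=
    fun n y hy => proxIneq hf_ne_bot hf_convex (hγpos n) (hxne (n+1)) (hiter n) hy
  -- Fejér inequality wrt any "stationary" point q
  have fejer_all : ∀ q : H, f q ≠ ⊤ → (∀ y, f y ≠ ⊤ → F q ≤ F y + ⟪g' q, y - q⟫) →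
      ∀ n, ‖x (n+1) - q‖^2 ≤ ‖x n - q‖^2 - ε * β / 2 * ‖x (n+1) - x n‖^2 := by
    intro q hq hQq n
    have h1 := hP n q hq
    have h2 := hQq (x (n+1)) (hxne (n+1))
    have h2' := mul_le_mul_of_nonneg_left h2 (hγpos n).le
    have hkey : ⟪x n - γ n • g' (x n) - x (n+1), q - x (n+1)⟫ ≤
        γ n * ⟪g' q, x (n+1) - q⟫ := by nlinarith [h1, h2']
    exact fejer_step hβ hε (hγ n).1 (hγ n).2 hkey (coco hβ hg_convex hg_grad hg_lip (x n) q)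
  -- Q at xstar
  have hQ : ∀ y, f y ≠ ⊤ → F xstar ≤ F y + ⟪g' xstar, y - xstar⟫ :=
    fun y hy => minIneq hf_ne_bot hf_convex hg_grad hxstar_ne_top hxstar hy
  have hfejer := fejer_all xstar hxstar_ne_top hQ
  set a : ℕ → ℝ := fun n => ‖x n - xstar‖^2 with ha
  have hcpos : (0:ℝ) < ε * β / 2 := by positivity
  have hanti : Antitone a := by
    apply antitone_nat_of_succ_le
    intro n
    show ‖x (n+1) - xstar‖^2 ≤ ‖x n - xstar‖^2
    have := hfejer n
    nlinarith [mul_nonneg hcpos.le (sq_nonneg ‖x (n+1) - x n‖)]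
  have haconv : Tendsto a atTop (𝓝 (⨅ n, a n)) :=
    tendsto_atTop_ciInf hanti ⟨0, by rintro y ⟨n, rfl⟩; positivity⟩
  -- successive differences tend to 0
  have hdiff : Tendsto (fun n => ‖x (n+1) - x n‖) atTop (𝓝 0) := by
    apply tendsto_of_sq (fun n => norm_nonneg _)
    have h1 : Tendsto (fun n => a n - a (n+1)) atTop (𝓝 0) := by
      have h2 : Tendsto (fun n => a (n+1)) atTop (𝓝 (⨅ n, a n)) :=
        haconv.comp (tendsto_add_atTop_nat 1)
      simpa using haconv.sub h2
    apply squeeze_zero (fun n => sq_nonneg _)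
      (fun n => ?_) (by simpa using h1.const_mul (2/(ε*β)))
    have := hfejer n
    show ‖x (n+1) - x n‖^2 ≤ 2/(ε*β) * (‖x n - xstar‖^2 - ‖x (n+1) - xstar‖^2)
    rw [div_mul_eq_mul_div, le_div_iff₀ (by positivity : (0:ℝ) < ε*β)]
    nlinarith [this]
  -- bounded, extract convergent subsequence
  have hbdd : ∀ n, x n ∈ Metric.closedBall xstar (Real.sqrt (a 0)) := by
    intro n
    rw [Metric.mem_closedBall, dist_eq_norm]
    have h1 : a n ≤ a 0 := hanti (Nat.zero_le n)
    have : ‖x n - xstar‖ = Real.sqrt (a n) := (Real.sqrt_sq (norm_nonneg _)).symm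
    rw [this]
    exact Real.sqrt_le_sqrt h1
  obtain ⟨p, -, φ, hφmono, hφtends⟩ :=
    (isCompact_closedBall xstar (Real.sqrt (a 0))).tendsto_subseq hbdd
  obtain ⟨γbar, hγbar_mem, ψ, hψmono, hψtends⟩ :=
    (isCompact_Icc : IsCompact (Set.Icc ε (2/β - ε))).tendsto_subseq (fun k => hγ (φ k))
  set σ : ℕ → ℕ := φ ∘ ψ with hσ
  have hσmono : StrictMono σ := hφmono.comp hψmono
  have hxσ : Tendsto (fun k => x (σ k)) atTop (𝓝 p) :=
    hφtends.comp hψmono.tendsto_atTop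
  have hγσ : Tendsto (fun k => γ (σ k)) atTop (𝓝 γbar) := hψtends
  have hγbar_pos : 0 < γbar := lt_of_lt_of_le hε hγbar_mem.1
  have hxσ1 : Tendsto (fun k => x (σ k + 1)) atTop (𝓝 p) := by
    have h1 : Tendsto (fun k => x (σ k + 1) - x (σ k)) atTop (𝓝 0) := by
      rw [tendsto_zero_iff_norm_tendsto_zero]
      exact hdiff.comp hσmono.tendsto_atTop
    have := h1.add hxσ
    simpa using this
  have hg'cont : Continuous g' := lipCont hβ hg_lip
  -- p satisfies the subgradient inequality
  have hpmin : ∀ y : H, f y ≠ ⊤ → f p ≤ ((F y + ⟪g' p, y - p⟫ : ℝ) : EReal) := by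
    intro y hy
    set r : ℕ → ℝ := fun k =>
      F y + ⟪x (σ k) - γ (σ k) • g' (x (σ k)) - x (σ k + 1), x (σ k + 1) - y⟫ / γ (σ k)
      with hr
    have hrk : ∀ k, F (x (σ k + 1)) ≤ r k := by
      intro k
      have h1 := hP (σ k) y hy
      rw [show (⟪x (σ k) - γ (σ k) • g' (x (σ k)) - x (σ k + 1), y - x (σ k + 1)⟫ : ℝ)
          = -⟪x (σ k) - γ (σ k) • g' (x (σ k)) - x (σ k + 1), x (σ k + 1) - y⟫ by
        rw [show y - x (σ k + 1) = -(x (σ k + 1) - y) by abel, inner_neg_right]] at h1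
      have h2 : (F (x (σ k + 1)) - F y) * γ (σ k) ≤
          ⟪x (σ k) - γ (σ k) • g' (x (σ k)) - x (σ k + 1), x (σ k + 1) - y⟫ := by
        nlinarith [h1]
      have h3 := (le_div_iff₀ (hγpos (σ k))).mpr h2
      show F (x (σ k + 1)) ≤ F y +
          ⟪x (σ k) - γ (σ k) • g' (x (σ k)) - x (σ k + 1), x (σ k + 1) - y⟫ / γ (σ k)
      linarith [h3]
    have hrtends : Tendsto r atTop (𝓝 (F y + ⟪g' p, y - p⟫)) := by
      have hu : Tendsto (fun k => x (σ k) - γ (σ k) • g' (x (σ k)) - x (σ k + 1))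
          atTop (𝓝 (p - γbar • g' p - p)) := by
        apply Tendsto.sub _ hxσ1
        exact hxσ.sub (hγσ.smul ((hg'cont.tendsto p).comp hxσ))
      have hinner : Tendsto (fun k =>
          (⟪x (σ k) - γ (σ k) • g' (x (σ k)) - x (σ k + 1), x (σ k + 1) - y⟫ : ℝ))
          atTop (𝓝 ⟪p - γbar • g' p - p, p - y⟫) :=
        hu.inner (hxσ1.sub_const y)
      have hdivten : Tendsto (fun k =>
          (⟪x (σ k) - γ (σ k) • g' (x (σ k)) - x (σ k + 1), x (σ k + 1) - y⟫ : ℝ) / γ (σ k))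
          atTop (𝓝 (⟪p - γbar • g' p - p, p - y⟫ / γbar)) :=
        hinner.div hγσ (ne_of_gt hγbar_pos)
      have heq : ⟪p - γbar • g' p - p, p - y⟫ / γbar = ⟪g' p, y - p⟫ := by
        rw [show p - γbar • g' p - p = -(γbar • g' p) by abel, inner_neg_left,
          real_inner_smul_left, show p - y = -(y - p) by abel, inner_neg_right]
        field_simp
      have h6 := hdivten.const_add (F y)
      rw [heq] at h6
      exact h6
    by_contra hcon
    push_neg at hcon
    obtain ⟨r', hr1, hr2⟩ := EReal.exists_between_coe_real hcon
    have hev1 : ∀ᶠ k in atTop, (r' : EReal) < f (x (σ k + 1)) :=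
      hxσ1.eventually (hf_lsc.lowerSemicontinuousAt p _ hr2)
    have hev2 : ∀ᶠ k in atTop, r k < r' :=
      hrtends.eventually_lt_const (EReal.coe_lt_coe_iff.mp hr1)
    rcases (hev1.and hev2).exists with ⟨k, hk1, hk2⟩
    have : r' < F (x (σ k + 1)) := by
      rw [show f (x (σ k + 1)) = ((F (x (σ k + 1)) : ℝ) : EReal) from
        (EReal.coe_toReal (hxne _) (hf_ne_bot _)).symm, EReal.coe_lt_coe_iff] at hk1
      exact hk1
    linarith [hrk k]
  have hp_ne_top : f p ≠ ⊤ := by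
    intro htop
    have := hpmin z₀ hz₀
    rw [htop] at this
    exact EReal.coe_ne_top _ (le_antisymm le_top this)
  have hQp : ∀ y, f y ≠ ⊤ → F p ≤ F y + ⟪g' p, y - p⟫ := by
    intro y hy
    have h1 := hpmin y hy
    rw [show f p = ((F p : ℝ) : EReal) from
      (EReal.coe_toReal hp_ne_top (hf_ne_bot _)).symm, EReal.coe_le_coe_iff] at h1
    exact h1
  -- p is a minimizer of f + g
  have hpmin' : ∀ y : H, f p + (g p : EReal) ≤ f y + (g y : EReal) := by
    intro y
    by_cases hy : f y = ⊤
    · rw [hy, EReal.top_add_coe]; exact le_top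
    · have h1 := hQp y hy
      have h2 := gradIneq hg_convex (hg_grad p) y
      have h3 : F p + g p ≤ F y + g y := by linarith
      rw [show f p = ((F p : ℝ) : EReal) from
        (EReal.coe_toReal hp_ne_top (hf_ne_bot _)).symm,
        show f y = ((F y : ℝ) : EReal) from
        (EReal.coe_toReal hy (hf_ne_bot _)).symm, ← EReal.coe_add, ← EReal.coe_add]
      exact_mod_cast h3
  -- Fejér monotonicity wrt p gives convergence of the whole sequence
  have hfejp := fejer_all p hp_ne_top hQp
  set b : ℕ → ℝ := fun n => ‖x n - p‖^2 with hb
  have hantib : Antitone b := by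
    apply antitone_nat_of_succ_le
    intro n
    show ‖x (n+1) - p‖^2 ≤ ‖x n - p‖^2
    have := hfejp n
    nlinarith [mul_nonneg hcpos.le (sq_nonneg ‖x (n+1) - x n‖)]
  have hbconv : Tendsto b atTop (𝓝 (⨅ n, b n)) :=
    tendsto_atTop_ciInf hantib ⟨0, by rintro y ⟨n, rfl⟩; positivity⟩
  have hsubz : Tendsto (fun k => b (σ k)) atTop (𝓝 0) := by
    have h1 : Tendsto (fun k => x (σ k) - p) atTop (𝓝 0) := by
      simpa using hxσ.sub_const p
    have h2 : Tendsto (fun k => ‖x (σ k) - p‖) atTop (𝓝 0) := by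
      rw [← tendsto_zero_iff_norm_tendsto_zero]
      exact h1
    have := h2.mul h2
    simpa [hb, sq] using this
  have hinf0 : (⨅ n, b n) = 0 :=
    tendsto_nhds_unique (hbconv.comp hσmono.tendsto_atTop) hsubz
  rw [hinf0] at hbconv
  have hxlim : Tendsto x atTop (𝓝 p) := by
    have h1 : Tendsto (fun n => ‖x n - p‖) atTop (𝓝 0) :=
      tendsto_of_sq (fun n => norm_nonneg _) hbconv
    have h2 : Tendsto (fun n => x n - p) atTop (𝓝 0) :=
      tendsto_zero_iff_norm_tendsto_zero.mpr h1
    simpa using h2.add_const p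
  exact ⟨p, hxlim, hpmin'⟩
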